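/- arXiv:math-ph/0609057 — 2 statements merged into one kernel-verified Lean document; each statement's English description precedes it below -/
import Mathlib

section
/- For all complex numbers u, v with u, −u, v, −v ∉ {z_1,…,z_L} and u ≠ v, u ≠ −v, the following hold as N²×N² matrices over End(W): (i) [S(u)_a, S(v)_b] = [S(u)_a + S(v)_b, (u − v)^{−1} P_{ab}] + [S(u)_a − S(v)_b, (u + v)^{−1} Q_{ab}], where Q_{ab} := K_a P_{ab}^{t_a} K_a^{−1}; and (ii) K_a P_{ab}^{t_a} K_a^{−1} = K_b P_{ab}^{t_b} K_b^{−1}, where t_a (resp. t_b) denotes partial transposition in the first (resp. second) auxiliary matrix factor. -/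
open Matrix
open scoped TensorProduct

noncomputable section

variable {N L : ℕ}
variable {V : Fin L → Type} [∀ ℓ, AddCommGroup (V ℓ)] [∀ ℓ, Module ℂ (V ℓ)]
variable (ρ : ∀ ℓ, Matrix (Fin N) (Fin N) ℂ →ₗ[ℂ] Module.End ℂ (V ℓ))

/-- The operator `X^{(ℓ)}` on `W = ⨂_ℓ V ℓ`, acting as `ρ ℓ X` in the `ℓ`-th tensor
factor and as the identity elsewhere. -/
def siteOp (ℓ : Fin L) (X : Matrix (Fin N) (Fin N) ℂ) :
    Module.End ℂ (⨂[ℂ] i, V i) :=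
  PiTensorProduct.map (Function.update (fun i => (LinearMap.id : V i →ₗ[ℂ] V i)) ℓ (ρ ℓ X))

/-- The matrix `𝐏_{aℓ}` over `End W`, whose `(i,j)` entry is `(E_{ji})^{(ℓ)}`. -/
def Pm (ℓ : Fin L) : Matrix (Fin N) (Fin N) (Module.End ℂ (⨂[ℂ] i, V i)) :=
  Matrix.of fun i j => siteOp ρ ℓ (Matrix.single j i 1)

/-- `T_a(u) = Σ_ℓ (u − z_ℓ)⁻¹ 𝐏_{aℓ}`. -/
def Tm (z : Fin L → ℂ) (u : ℂ) : Matrix (Fin N) (Fin N) (Module.End ℂ (⨂[ℂ] i, V i)) :=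
  ∑ ℓ : Fin L, (u - z ℓ)⁻¹ • Pm ρ ℓ

/-- A scalar `N×N` matrix viewed as a matrix over `End W`. -/
def emb (V : Fin L → Type) [∀ ℓ, AddCommGroup (V ℓ)] [∀ ℓ, Module ℂ (V ℓ)]
    (M : Matrix (Fin N) (Fin N) ℂ) :
    Matrix (Fin N) (Fin N) (Module.End ℂ (⨂[ℂ] i, V i)) :=
  M.map (algebraMap ℂ (Module.End ℂ (⨂[ℂ] i, V i)))

/-- `S_a(u) = T_a(u) + K T_a(−u)^{t_a} K⁻¹`. -/
def Sm (z : Fin L → ℂ) (K : Matrix (Fin N) (Fin N) ℂ) (u : ℂ) :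
    Matrix (Fin N) (Fin N) (Module.End ℂ (⨂[ℂ] i, V i)) :=
  Tm ρ z u + emb V K * (Tm ρ z (-u))ᵀ * emb V K⁻¹

/-- `M_a = M ⊗ 1` as an `N²×N²` matrix. -/
def aM {A : Type} [Zero A] (M : Matrix (Fin N) (Fin N) A) :
    Matrix (Fin N × Fin N) (Fin N × Fin N) A :=
  Matrix.of fun p q => if p.2 = q.2 then M p.1 q.1 else 0

/-- `M_b = 1 ⊗ M` as an `N²×N²` matrix. -/
def bM {A : Type} [Zero A] (M : Matrix (Fin N) (Fin N) A) :
    Matrix (Fin N × Fin N) (Fin N × Fin N) A :=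
  Matrix.of fun p q => if p.1 = q.1 then M p.2 q.2 else 0

/-- The permutation matrix `P_{ab} = Σ_{ij} E_{ij} ⊗ E_{ji}`. -/
def PP (N : ℕ) (A : Type) [Zero A] [One A] :
    Matrix (Fin N × Fin N) (Fin N × Fin N) A :=
  Matrix.of fun p q => if p.1 = q.2 ∧ p.2 = q.1 then 1 else 0

/-- Partial transposition `t_a` in the first auxiliary factor of an `N²×N²` matrix. -/
def ptA {A : Type} (M : Matrix (Fin N × Fin N) (Fin N × Fin N) A) :
    Matrix (Fin N × Fin N) (Fin N × Fin N) A :=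
  Matrix.of fun p q => M (q.1, p.2) (p.1, q.2)

/-- Partial transposition `t_b` in the second auxiliary factor of an `N²×N²` matrix. -/
def ptB {A : Type} (M : Matrix (Fin N × Fin N) (Fin N × Fin N) A) :
    Matrix (Fin N × Fin N) (Fin N × Fin N) A :=
  Matrix.of fun p q => M (p.1, q.2) (q.1, p.2)

lemma mapUpdate_sub (ℓ : Fin L) (f g : Module.End ℂ (V ℓ)) :
    PiTensorProduct.map (Function.update (fun i => (LinearMap.id : V i →ₗ[ℂ] V i)) ℓ (f - g))
      = PiTensorProduct.map (Function.update (fun i => (LinearMap.id : V i →ₗ[ℂ] V i)) ℓ f)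
        - PiTensorProduct.map (Function.update (fun i => (LinearMap.id : V i →ₗ[ℂ] V i)) ℓ g) := by
  rw [sub_eq_add_neg, PiTensorProduct.map_update_add, ← neg_one_smul ℂ g,
    PiTensorProduct.map_update_smul]
  module

lemma siteOp_add (ℓ : Fin L) (X Y : Matrix (Fin N) (Fin N) ℂ) :
    siteOp ρ ℓ (X + Y) = siteOp ρ ℓ X + siteOp ρ ℓ Y := by
  unfold siteOp; rw [map_add, PiTensorProduct.map_update_add]

lemma siteOp_smul (ℓ : Fin L) (c : ℂ) (X : Matrix (Fin N) (Fin N) ℂ) :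
    siteOp ρ ℓ (c • X) = c • siteOp ρ ℓ X := by
  unfold siteOp; rw [_root_.map_smul, PiTensorProduct.map_update_smul]

def siteL (ℓ : Fin L) : Matrix (Fin N) (Fin N) ℂ →ₗ[ℂ] Module.End ℂ (⨂[ℂ] i, V i) where
  toFun X := siteOp ρ ℓ X
  map_add' X Y := siteOp_add ρ ℓ X Y
  map_smul' c X := siteOp_smul ρ ℓ c X

@[simp] lemma siteL_apply (ℓ : Fin L) (X : Matrix (Fin N) (Fin N) ℂ) :
    siteL ρ ℓ X = siteOp ρ ℓ X := rfl

lemma update_comp (ℓ : Fin L) (f g : Module.End ℂ (V ℓ)) (i : Fin L) :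
    (Function.update (fun i => (LinearMap.id : V i →ₗ[ℂ] V i)) ℓ f i) ∘ₗ
      (Function.update (fun i => (LinearMap.id : V i →ₗ[ℂ] V i)) ℓ g i)
    = Function.update (fun i => (LinearMap.id : V i →ₗ[ℂ] V i)) ℓ (f ∘ₗ g) i := by
  by_cases h : i = ℓ
  · subst h; simp
  · simp [Function.update_of_ne h]

lemma siteOp_mul_same (ℓ : Fin L) (X Y : Matrix (Fin N) (Fin N) ℂ) :
    siteOp ρ ℓ X * siteOp ρ ℓ Y
      = PiTensorProduct.map
          (Function.update (fun i => (LinearMap.id : V i →ₗ[ℂ] V i)) ℓ (ρ ℓ X ∘ₗ ρ ℓ Y)) := by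
  unfold siteOp
  rw [Module.End.mul_eq_comp, ← PiTensorProduct.map_comp]
  congr 1
  funext i
  exact update_comp ℓ (ρ ℓ X) (ρ ℓ Y) i

lemma siteOp_bracket (hρ : ∀ ℓ (X Y : Matrix (Fin N) (Fin N) ℂ),
      ρ ℓ (X * Y - Y * X) = ρ ℓ X * ρ ℓ Y - ρ ℓ Y * ρ ℓ X)
    (ℓ : Fin L) (X Y : Matrix (Fin N) (Fin N) ℂ) :
    siteOp ρ ℓ X * siteOp ρ ℓ Y - siteOp ρ ℓ Y * siteOp ρ ℓ X
      = siteOp ρ ℓ (X * Y - Y * X) := by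
  rw [siteOp_mul_same, siteOp_mul_same]
  unfold siteOp
  rw [hρ ℓ X Y, mapUpdate_sub, Module.End.mul_eq_comp, Module.End.mul_eq_comp]

lemma siteOp_comm (ℓ m : Fin L) (h : ℓ ≠ m) (X Y : Matrix (Fin N) (Fin N) ℂ) :
    siteOp ρ ℓ X * siteOp ρ m Y = siteOp ρ m Y * siteOp ρ ℓ X := by
  unfold siteOp
  rw [Module.End.mul_eq_comp, Module.End.mul_eq_comp, ← PiTensorProduct.map_comp,
    ← PiTensorProduct.map_comp]
  congr 1
  funext i
  by_cases hℓ : i = ℓ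
  · subst hℓ; simp [Function.update_of_ne h]
  · by_cases hm : i = m
    · subst hm; simp [Function.update_of_ne (Ne.symm h)]
    · simp [Function.update_of_ne hℓ, Function.update_of_ne hm]

lemma bracket_sum (hρ : ∀ ℓ (X Y : Matrix (Fin N) (Fin N) ℂ),
      ρ ℓ (X * Y - Y * X) = ρ ℓ X * ρ ℓ Y - ρ ℓ Y * ρ ℓ X)
    (X Y : Fin L → Matrix (Fin N) (Fin N) ℂ) :
    (∑ ℓ, siteL ρ ℓ (X ℓ)) * (∑ m, siteL ρ m (Y m))
      - (∑ m, siteL ρ m (Y m)) * (∑ ℓ, siteL ρ ℓ (X ℓ))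
      = ∑ ℓ, siteL ρ ℓ (X ℓ * Y ℓ - Y ℓ * X ℓ) := by
  rw [Finset.sum_mul_sum, Finset.sum_mul_sum]
  rw [Finset.sum_comm (s := Finset.univ) (t := Finset.univ)
    (f := fun m ℓ => siteL ρ m (Y m) * siteL ρ ℓ (X ℓ))]
  rw [← Finset.sum_sub_distrib]
  refine Finset.sum_congr rfl fun ℓ _ => ?_
  rw [← Finset.sum_sub_distrib]
  rw [Finset.sum_eq_single ℓ]
  · rw [siteL_apply, siteL_apply, siteL_apply, ← siteOp_bracket ρ hρ]
  · intro m _ hm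
    rw [siteL_apply, siteL_apply, siteOp_comm ρ m ℓ hm (Y m) (X ℓ), sub_self]
  · intro h; exact absurd (Finset.mem_univ ℓ) h

section scal
variable {A : Type*} [Semiring A] [Algebra ℂ A]
lemma algC_mul (c : ℂ) (f : A) : algebraMap ℂ A c * f = c • f := (Algebra.smul_def c f).symm
lemma mul_algC (c : ℂ) (f : A) : f * algebraMap ℂ A c = c • f := by
  rw [← Algebra.commutes c f, ← Algebra.smul_def]
end scal

/-- per-site matrix entering `S(u)_{ij} = ∑_ℓ siteOp ℓ (Fm ...)`. -/
def Fm (K : Matrix (Fin N) (Fin N) ℂ) (zl u : ℂ) (i j : Fin N) : Matrix (Fin N) (Fin N) ℂ :=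
  (u - zl)⁻¹ • Matrix.single j i 1
    + (-u - zl)⁻¹ • vecMulVec (fun r => K i r) (fun s => K⁻¹ s j)

lemma vecMulVec_eq_sum (f g : Fin N → ℂ) :
    vecMulVec f g = ∑ r, ∑ s, (f r * g s) • Matrix.single r s (1 : ℂ) := by
  ext x y
  simp only [Matrix.sum_apply, Matrix.smul_apply, Matrix.single, Matrix.of_apply,
    vecMulVec_apply, smul_eq_mul, mul_ite, mul_one, mul_zero]
  have hinner : ∀ r : Fin N,
      (∑ s, if r = x ∧ s = y then f r * g s else 0) = if r = x then f r * g y else 0 := by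
    intro r
    by_cases h : r = x
    · subst h; simp
    · simp [h]
  simp only [hinner]
  simp

lemma siteOp_vecMulVec (ℓ : Fin L) (f g : Fin N → ℂ) :
    siteOp ρ ℓ (vecMulVec f g)
      = ∑ r, ∑ s, (f r * g s) • siteOp ρ ℓ (Matrix.single r s 1) := by
  have : siteOp ρ ℓ (vecMulVec f g)
      = siteL ρ ℓ (∑ r, ∑ s, (f r * g s) • Matrix.single r s (1 : ℂ)) := by
    rw [← vecMulVec_eq_sum]; rfl
  rw [this, map_sum]
  refine Finset.sum_congr rfl fun r _ => ?_
  rw [map_sum]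
  refine Finset.sum_congr rfl fun s _ => ?_
  exact siteOp_smul ρ ℓ _ _

lemma swap3 {M : Type*} [AddCommMonoid M] (f : Fin N → Fin N → Fin L → M) :
    ∑ s : Fin N, ∑ r : Fin N, ∑ ℓ : Fin L, f s r ℓ
      = ∑ ℓ : Fin L, ∑ r : Fin N, ∑ s : Fin N, f s r ℓ :=
  calc ∑ s : Fin N, ∑ r : Fin N, ∑ ℓ : Fin L, f s r ℓ
      = ∑ r : Fin N, ∑ s : Fin N, ∑ ℓ : Fin L, f s r ℓ := Finset.sum_comm
    _ = ∑ r : Fin N, ∑ ℓ : Fin L, ∑ s : Fin N, f s r ℓ :=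
        Finset.sum_congr rfl fun r _ => Finset.sum_comm
    _ = ∑ ℓ : Fin L, ∑ r : Fin N, ∑ s : Fin N, f s r ℓ := Finset.sum_comm

lemma Tm_apply (z : Fin L → ℂ) (u : ℂ) (i j : Fin N) :
    Tm ρ z u i j = ∑ ℓ, (u - z ℓ)⁻¹ • siteOp ρ ℓ (Matrix.single j i 1) := by
  simp [Tm, Pm, Matrix.sum_apply, Matrix.smul_apply]

lemma Sm_apply (z : Fin L → ℂ) (K : Matrix (Fin N) (Fin N) ℂ) (u : ℂ) (i j : Fin N) :
    Sm ρ z K u i j = ∑ ℓ, siteL ρ ℓ (Fm K (z ℓ) u i j) := by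
  have h2 : (emb V K * (Tm ρ z (-u))ᵀ * emb V K⁻¹) i j
      = ∑ ℓ, (-u - z ℓ)⁻¹ • siteOp ρ ℓ (vecMulVec (fun r => K i r) (fun s => K⁻¹ s j)) := by
    have inner : ∀ s, (emb V K * (Tm ρ z (-u))ᵀ) i s
        = ∑ r, ∑ ℓ, (K i r * (-u - z ℓ)⁻¹) • siteOp ρ ℓ (Matrix.single r s 1) := by
      intro s
      rw [Matrix.mul_apply]
      refine Finset.sum_congr rfl fun r _ => ?_
      rw [Matrix.transpose_apply, Tm_apply]
      show algebraMap ℂ _ (K i r) * _ = _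
      rw [algC_mul, Finset.smul_sum]
      refine Finset.sum_congr rfl fun ℓ _ => ?_
      rw [smul_smul]
    rw [Matrix.mul_apply]
    simp only [inner]
    have embKi : ∀ s, (emb V K⁻¹) s j = algebraMap ℂ _ (K⁻¹ s j) := fun s => rfl
    simp only [embKi, Finset.sum_mul, mul_algC, smul_smul]
    simp only [siteOp_vecMulVec, Finset.smul_sum, smul_smul]
    rw [swap3]
    refine Finset.sum_congr rfl fun ℓ _ => Finset.sum_congr rfl fun r _ =>
      Finset.sum_congr rfl fun s _ => ?_
    congr 1
    ring
  simp only [Sm, Matrix.add_apply, Tm_apply, h2, Fm, siteL_apply]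
  rw [← Finset.sum_add_distrib]
  refine Finset.sum_congr rfl fun ℓ _ => ?_
  rw [siteOp_add, siteOp_smul, siteOp_smul]

section EntryLemmas
variable {A : Type} [NonAssocSemiring A]

lemma aM_mul_bM (X Y : Matrix (Fin N) (Fin N) A) (p q : Fin N × Fin N) :
    (aM X * bM Y) p q = X p.1 q.1 * Y p.2 q.2 := by
  rw [Matrix.mul_apply, Fintype.sum_prod_type]
  simp only [aM, bM, Matrix.of_apply, ite_mul, mul_ite, zero_mul, mul_zero]
  simp [Finset.sum_ite_eq, Finset.sum_ite_eq']

lemma bM_mul_aM (X Y : Matrix (Fin N) (Fin N) A) (p q : Fin N × Fin N) :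
    (bM Y * aM X) p q = Y p.2 q.2 * X p.1 q.1 := by
  rw [Matrix.mul_apply, Fintype.sum_prod_type]
  simp only [aM, bM, Matrix.of_apply, ite_mul, mul_ite, zero_mul, mul_zero]
  simp [Finset.sum_ite_eq, Finset.sum_ite_eq']

lemma aM_mul_PP (X : Matrix (Fin N) (Fin N) A) (p q : Fin N × Fin N) :
    (aM X * PP N A) p q = if p.2 = q.1 then X p.1 q.2 else 0 := by
  rw [Matrix.mul_apply, Fintype.sum_prod_type]
  simp only [aM, PP, Matrix.of_apply, ite_mul, mul_ite, zero_mul, mul_zero, mul_one, ite_and]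
  simp [Finset.sum_ite_eq, Finset.sum_ite_eq']

lemma PP_mul_aM (X : Matrix (Fin N) (Fin N) A) (p q : Fin N × Fin N) :
    (PP N A * aM X) p q = if p.1 = q.2 then X p.2 q.1 else 0 := by
  rw [Matrix.mul_apply, Fintype.sum_prod_type]
  simp only [aM, PP, Matrix.of_apply, ite_mul, mul_ite, zero_mul, mul_zero, one_mul, ite_and]
  simp [Finset.sum_ite_eq, Finset.sum_ite_eq']

lemma bM_mul_PP (X : Matrix (Fin N) (Fin N) A) (p q : Fin N × Fin N) :
    (bM X * PP N A) p q = if p.1 = q.2 then X p.2 q.1 else 0 := by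
  rw [Matrix.mul_apply, Fintype.sum_prod_type]
  simp only [bM, PP, Matrix.of_apply, ite_mul, mul_ite, zero_mul, mul_zero, mul_one, ite_and]
  simp [Finset.sum_ite_eq, Finset.sum_ite_eq']

lemma PP_mul_bM (X : Matrix (Fin N) (Fin N) A) (p q : Fin N × Fin N) :
    (PP N A * bM X) p q = if p.2 = q.1 then X p.1 q.2 else 0 := by
  rw [Matrix.mul_apply, Fintype.sum_prod_type]
  simp only [bM, PP, Matrix.of_apply, ite_mul, mul_ite, zero_mul, mul_zero, one_mul, ite_and]
  simp [Finset.sum_ite_eq, Finset.sum_ite_eq']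

end EntryLemmas

section QLemmas
variable (z : Fin L → ℂ) (K : Matrix (Fin N) (Fin N) ℂ)

lemma Q_entry (p q : Fin N × Fin N) :
    (aM (emb V K) * ptA (PP N (Module.End ℂ (⨂[ℂ] i, V i))) * aM (emb V K⁻¹)) p q
      = algebraMap ℂ _ (K p.1 p.2 * K⁻¹ q.2 q.1) := by
  have h1 : ∀ r : Fin N × Fin N,
      (aM (emb V K) * ptA (PP N (Module.End ℂ (⨂[ℂ] i, V i)))) p r
        = if r.1 = r.2 then algebraMap ℂ _ (K p.1 p.2) else 0 := by
    intro r
    rw [Matrix.mul_apply, Fintype.sum_prod_type]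
    simp only [aM, ptA, PP, emb, Matrix.of_apply, Matrix.map_apply, ite_mul, mul_ite,
      zero_mul, mul_zero, mul_one, ite_and]
    simp [Finset.sum_ite_eq, Finset.sum_ite_eq']
  rw [Matrix.mul_apply, Fintype.sum_prod_type]
  simp only [h1]
  simp only [aM, emb, Matrix.of_apply, Matrix.map_apply, ite_mul, mul_ite, zero_mul,
    mul_zero, ite_and]
  rw [_root_.map_mul (algebraMap ℂ (Module.End ℂ (⨂[ℂ] i, V i)))]
  simp [Finset.sum_ite_eq, Finset.sum_ite_eq']

lemma QB_entry (p q : Fin N × Fin N) :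
    (bM (emb V K) * ptB (PP N (Module.End ℂ (⨂[ℂ] i, V i))) * bM (emb V K⁻¹)) p q
      = algebraMap ℂ _ (K p.2 p.1 * K⁻¹ q.1 q.2) := by
  have h1 : ∀ r : Fin N × Fin N,
      (bM (emb V K) * ptB (PP N (Module.End ℂ (⨂[ℂ] i, V i)))) p r
        = if r.1 = r.2 then algebraMap ℂ _ (K p.2 p.1) else 0 := by
    intro r
    rw [Matrix.mul_apply, Fintype.sum_prod_type]
    simp only [bM, ptB, PP, emb, Matrix.of_apply, Matrix.map_apply, ite_mul, mul_ite,
      zero_mul, mul_zero, mul_one, ite_and]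
    simp [Finset.sum_ite_eq, Finset.sum_ite_eq']
    exact if_congr eq_comm rfl rfl
  rw [Matrix.mul_apply, Fintype.sum_prod_type]
  simp only [h1]
  simp only [bM, emb, Matrix.of_apply, Matrix.map_apply, ite_mul, mul_ite, zero_mul,
    mul_zero, ite_and]
  rw [_root_.map_mul (algebraMap ℂ (Module.End ℂ (⨂[ℂ] i, V i)))]
  simp [Finset.sum_ite_eq, Finset.sum_ite_eq']

variable {W : Type*}

lemma aM_mul_Q (X : Matrix (Fin N) (Fin N) (Module.End ℂ (⨂[ℂ] i, V i))) (p q : Fin N × Fin N) :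
    (aM X * (aM (emb V K) * ptA (PP N (Module.End ℂ (⨂[ℂ] i, V i))) * aM (emb V K⁻¹))) p q
      = ∑ r, (K r p.2 * K⁻¹ q.2 q.1) • X p.1 r := by
  rw [Matrix.mul_apply, Fintype.sum_prod_type]
  simp only [Q_entry]
  simp only [aM, Matrix.of_apply, ite_mul, zero_mul]
  simp only [mul_algC]
  simp [Finset.sum_ite_eq, Finset.sum_ite_eq']

lemma Q_mul_aM (X : Matrix (Fin N) (Fin N) (Module.End ℂ (⨂[ℂ] i, V i))) (p q : Fin N × Fin N) :
    ((aM (emb V K) * ptA (PP N (Module.End ℂ (⨂[ℂ] i, V i))) * aM (emb V K⁻¹)) * aM X) p q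
      = ∑ r, (K p.1 p.2 * K⁻¹ q.2 r) • X r q.1 := by
  rw [Matrix.mul_apply, Fintype.sum_prod_type]
  simp only [Q_entry]
  simp only [aM, Matrix.of_apply, mul_ite, mul_zero]
  simp only [algC_mul]
  simp [Finset.sum_ite_eq, Finset.sum_ite_eq']

lemma bM_mul_Q (X : Matrix (Fin N) (Fin N) (Module.End ℂ (⨂[ℂ] i, V i))) (p q : Fin N × Fin N) :
    (bM X * (aM (emb V K) * ptA (PP N (Module.End ℂ (⨂[ℂ] i, V i))) * aM (emb V K⁻¹))) p q
      = ∑ r, (K p.1 r * K⁻¹ q.2 q.1) • X p.2 r := by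
  rw [Matrix.mul_apply, Fintype.sum_prod_type]
  simp only [Q_entry]
  simp only [bM, Matrix.of_apply, ite_mul, zero_mul]
  simp only [mul_algC]
  simp [Finset.sum_ite_eq, Finset.sum_ite_eq']

lemma Q_mul_bM (X : Matrix (Fin N) (Fin N) (Module.End ℂ (⨂[ℂ] i, V i))) (p q : Fin N × Fin N) :
    ((aM (emb V K) * ptA (PP N (Module.End ℂ (⨂[ℂ] i, V i))) * aM (emb V K⁻¹)) * bM X) p q
      = ∑ r, (K p.1 p.2 * K⁻¹ r q.1) • X r q.2 := by
  rw [Matrix.mul_apply, Fintype.sum_prod_type]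
  simp only [Q_entry]
  simp only [bM, Matrix.of_apply, mul_ite, mul_zero]
  simp only [algC_mul]
  simp [Finset.sum_ite_eq, Finset.sum_ite_eq']

end QLemmas

section Sym
variable (K : Matrix (Fin N) (Fin N) ℂ) (η : ℂ)

lemma Kinv_transpose (hη : η * η = 1) (hKinv : IsUnit K.det) (hKt : Kᵀ = η • K) :
    (K⁻¹)ᵀ = η • K⁻¹ := by
  rw [Matrix.transpose_nonsing_inv]
  have h : Kᵀ * (η • K⁻¹) = 1 := by
    rw [hKt, Matrix.smul_mul, Matrix.mul_smul, smul_smul, hη,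
      Matrix.mul_nonsing_inv K hKinv, one_smul]
  exact Matrix.inv_eq_right_inv h

lemma K_sym (hKt : Kᵀ = η • K) (i j : Fin N) : K j i = η * K i j := by
  have := congrFun (congrFun hKt i) j
  simpa [Matrix.transpose_apply, Matrix.smul_apply, smul_eq_mul] using this

lemma Kinv_sym (hη : η * η = 1) (hKinv : IsUnit K.det) (hKt : Kᵀ = η • K) (i j : Fin N) :
    K⁻¹ j i = η * K⁻¹ i j := by
  have := congrFun (congrFun (Kinv_transpose K η hη hKinv hKt) i) j
  simpa [Matrix.transpose_apply, Matrix.smul_apply, smul_eq_mul] using this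

end Sym

lemma part_two (K : Matrix (Fin N) (Fin N) ℂ) (η : ℂ) (hη : η * η = 1)
    (hKinv : IsUnit K.det) (hKt : Kᵀ = η • K) :
    aM (emb V K) * ptA (PP N (Module.End ℂ (⨂[ℂ] i, V i))) * aM (emb V K⁻¹) =
      bM (emb V K) * ptB (PP N (Module.End ℂ (⨂[ℂ] i, V i))) * bM (emb V K⁻¹) := by
  refine Matrix.ext fun p q => ?_
  rw [Q_entry, QB_entry]
  refine congrArg _ ?_
  rw [K_sym K η hKt p.2 p.1, Kinv_sym K η hη hKinv hKt q.1 q.2]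
  linear_combination (K p.2 p.1 * K⁻¹ q.1 q.2) * hη

section VMV
variable {N : ℕ}

lemma vmv_mul (f g f' g' : Fin N → ℂ) :
    vecMulVec f g * vecMulVec f' g' = (∑ t, g t * f' t) • vecMulVec f g' := by
  refine Matrix.ext fun x y => ?_
  rw [Matrix.mul_apply, Matrix.smul_apply]
  simp only [vecMulVec_apply, smul_eq_mul]
  rw [Finset.sum_mul]
  exact Finset.sum_congr rfl fun t _ => by ring

lemma std_eq_vmv (i j : Fin N) :
    Matrix.single i j (1 : ℂ)
      = vecMulVec (Pi.single i (1 : ℂ)) (Pi.single j (1 : ℂ)) := by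
  refine Matrix.ext fun x y => ?_
  simp only [Matrix.single, Matrix.of_apply, vecMulVec_apply, Pi.single_apply]
  by_cases hx : x = i <;> by_cases hy : y = j
  · simp [hx, hy]
  · have h1 : ¬(j = y) := fun h => hy h.symm
    simp [hx, hy, h1]
  · have h1 : ¬(i = x) := fun h => hx h.symm
    simp [hx, hy, h1]
  · have h1 : ¬(i = x) := fun h => hx h.symm
    have h2 : ¬(j = y) := fun h => hy h.symm
    simp [hx, hy, h1, h2]

lemma vmv_smul_left (μ : ℂ) (f g : Fin N → ℂ) :
    vecMulVec (fun x => μ * f x) g = μ • vecMulVec f g := by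
  refine Matrix.ext fun x y => ?_
  simp [vecMulVec_apply, mul_assoc]

lemma vmv_smul_right (μ : ℂ) (f g : Fin N → ℂ) :
    vecMulVec f (fun y => μ * g y) = μ • vecMulVec f g := by
  refine Matrix.ext fun x y => ?_
  simp only [vecMulVec_apply, Matrix.smul_apply, smul_eq_mul]
  ring

variable (K : Matrix (Fin N) (Fin N) ℂ)

lemma dot_ee (i k : Fin N) : ∑ t, (Pi.single i 1 : Fin N → ℂ) t * (Pi.single k 1 : Fin N → ℂ) t
    = if i = k then 1 else 0 := by
  by_cases h : i = k
  · subst h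
    rw [if_pos rfl, Finset.sum_eq_single i]
    · simp
    · intro b _ hb; simp [Pi.single_apply, Ne.symm hb]
    · simp
  · rw [if_neg h, Finset.sum_eq_zero]
    intro t _
    simp only [Pi.single_apply]
    by_cases ht : t = i
    · subst ht; simp [fun hh : t = k => h hh]
    · simp [ht]

lemma dot_eK (p k : Fin N) : ∑ t, (Pi.single p 1 : Fin N → ℂ) t * K k t = K k p := by
  rw [Finset.sum_eq_single p]
  · simp
  · intro b _ hb; simp [Pi.single_apply, hb]
  · simp

lemma dot_Kie (j q : Fin N) : ∑ t, K⁻¹ t j * (Pi.single q 1 : Fin N → ℂ) t = K⁻¹ q j := by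
  rw [Finset.sum_eq_single q]
  · simp
  · intro b _ hb; simp [Pi.single_apply, hb]
  · simp

lemma dot_KiK (hKinv : IsUnit K.det) (j k : Fin N) :
    ∑ t, K⁻¹ t j * K k t = if k = j then 1 else 0 := by
  have h : ∑ t, K⁻¹ t j * K k t = (K * K⁻¹) k j := by
    rw [Matrix.mul_apply]
    exact Finset.sum_congr rfl fun t _ => by ring
  rw [h, Matrix.mul_nonsing_inv K hKinv, Matrix.one_apply]

lemma sumP1 (g : Fin N → ℂ) (p : Fin N) :
    ∑ r, K r p • vecMulVec (Pi.single r (1 : ℂ)) g = vecMulVec (fun x => K x p) g := by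
  refine Matrix.ext fun x y => ?_
  simp only [Matrix.sum_apply, Matrix.smul_apply, vecMulVec_apply, smul_eq_mul]
  rw [Finset.sum_eq_single x]
  · simp
  · intro b _ hb; simp [Pi.single_apply, Ne.symm hb]
  · simp

lemma sumP2 (hKinv : IsUnit K.det) (f : Fin N → ℂ) (p : Fin N) :
    ∑ r, K r p • vecMulVec f (fun s => K⁻¹ s r) = vecMulVec f (Pi.single p (1 : ℂ)) := by
  refine Matrix.ext fun x y => ?_
  simp only [Matrix.sum_apply, Matrix.smul_apply, vecMulVec_apply, smul_eq_mul]
  have h : ∀ r, K r p * (f x * K⁻¹ y r) = f x * (K⁻¹ y r * K r p) := fun r => by ring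
  simp only [h]
  rw [← Finset.mul_sum, ← Matrix.mul_apply, Matrix.nonsing_inv_mul K hKinv,
    Matrix.one_apply, Pi.single_apply]

lemma sumP3 (g : Fin N → ℂ) (p : Fin N) :
    ∑ r, K p r • vecMulVec (Pi.single r (1 : ℂ)) g = vecMulVec (fun x => K p x) g := by
  refine Matrix.ext fun x y => ?_
  simp only [Matrix.sum_apply, Matrix.smul_apply, vecMulVec_apply, smul_eq_mul]
  rw [Finset.sum_eq_single x]
  · simp
  · intro b _ hb; simp [Pi.single_apply, Ne.symm hb]
  · simp

lemma sumP4 (η : ℂ) (hη : η * η = 1) (hKinv : IsUnit K.det) (hKt : Kᵀ = η • K)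
    (f : Fin N → ℂ) (p : Fin N) :
    ∑ r, K p r • vecMulVec f (fun s => K⁻¹ s r)
      = η • vecMulVec f (Pi.single p (1 : ℂ)) := by
  refine Matrix.ext fun x y => ?_
  simp only [Matrix.sum_apply, Matrix.smul_apply, vecMulVec_apply, smul_eq_mul]
  have h : ∀ r, K p r * (f x * K⁻¹ y r) = η * (f x * (K p r * K⁻¹ r y)) := fun r => by
    rw [Kinv_sym K η hη hKinv hKt r y]; ring
  simp only [h]
  rw [← Finset.mul_sum, ← Finset.mul_sum, ← Matrix.mul_apply,
    Matrix.mul_nonsing_inv K hKinv, Matrix.one_apply, Pi.single_apply]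
  by_cases hpy : p = y
  · simp [hpy]
  · have h2 : ¬(y = p) := fun hh => hpy hh.symm
    simp [hpy, h2]

lemma sumP5 (f : Fin N → ℂ) (q : Fin N) :
    ∑ r, K⁻¹ q r • vecMulVec f (Pi.single r (1 : ℂ)) = vecMulVec f (fun y => K⁻¹ q y) := by
  refine Matrix.ext fun x y => ?_
  simp only [Matrix.sum_apply, Matrix.smul_apply, vecMulVec_apply, smul_eq_mul]
  rw [Finset.sum_eq_single y]
  · simp [mul_comm]
  · intro b _ hb; simp [Pi.single_apply, Ne.symm hb]
  · simp

lemma sumP6 (hKinv : IsUnit K.det) (g : Fin N → ℂ) (q : Fin N) :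
    ∑ r, K⁻¹ q r • vecMulVec (fun x => K r x) g
      = vecMulVec (Pi.single q (1 : ℂ)) g := by
  refine Matrix.ext fun x y => ?_
  simp only [Matrix.sum_apply, Matrix.smul_apply, vecMulVec_apply, smul_eq_mul]
  have h : ∀ r, K⁻¹ q r * (K r x * g y) = (K⁻¹ q r * K r x) * g y := fun r => by ring
  simp only [h]
  rw [← Finset.sum_mul, ← Matrix.mul_apply, Matrix.nonsing_inv_mul K hKinv,
    Matrix.one_apply, Pi.single_apply]
  by_cases hqx : q = x
  · simp [hqx]
  · have h2 : ¬(x = q) := fun hh => hqx hh.symm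
    simp [hqx, h2]

lemma sumP7 (f : Fin N → ℂ) (q : Fin N) :
    ∑ r, K⁻¹ r q • vecMulVec f (Pi.single r (1 : ℂ)) = vecMulVec f (fun y => K⁻¹ y q) := by
  refine Matrix.ext fun x y => ?_
  simp only [Matrix.sum_apply, Matrix.smul_apply, vecMulVec_apply, smul_eq_mul]
  rw [Finset.sum_eq_single y]
  · simp [mul_comm]
  · intro b _ hb; simp [Pi.single_apply, Ne.symm hb]
  · simp

lemma sumP8 (η : ℂ) (hη : η * η = 1) (hKinv : IsUnit K.det) (hKt : Kᵀ = η • K)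
    (g : Fin N → ℂ) (q : Fin N) :
    ∑ r, K⁻¹ r q • vecMulVec (fun x => K r x) g
      = η • vecMulVec (Pi.single q (1 : ℂ)) g := by
  refine Matrix.ext fun x y => ?_
  simp only [Matrix.sum_apply, Matrix.smul_apply, vecMulVec_apply, smul_eq_mul]
  have h : ∀ r, K⁻¹ r q * (K r x * g y) = η * ((K⁻¹ q r * K r x) * g y) := fun r => by
    rw [Kinv_sym K η hη hKinv hKt q r]; ring
  simp only [h]
  rw [← Finset.mul_sum, ← Finset.sum_mul, ← Matrix.mul_apply,
    Matrix.nonsing_inv_mul K hKinv, Matrix.one_apply, Pi.single_apply]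
  by_cases hqx : q = x
  · simp [hqx]
  · have h2 : ¬(x = q) := fun hh => hqx hh.symm
    simp [hqx, h2]

end VMV

section Key
variable {N : ℕ}

set_option maxHeartbeats 2000000 in
lemma keyClaim (K : Matrix (Fin N) (Fin N) ℂ) (η : ℂ) (hη2 : η * η = 1)
    (hKinv : IsUnit K.det) (hKt : Kᵀ = η • K)
    (u v zl : ℂ) (h1 : u - zl ≠ 0) (h2 : -u - zl ≠ 0) (h3 : v - zl ≠ 0) (h4 : -v - zl ≠ 0)
    (h5 : u - v ≠ 0) (h6 : u + v ≠ 0) (p1 p2 q1 q2 : Fin N) :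
    Fm K zl u p1 q1 * Fm K zl v p2 q2 - Fm K zl v p2 q2 * Fm K zl u p1 q1 =
      (u - v)⁻¹ • ((if p2 = q1 then Fm K zl u p1 q2 else 0)
          + if p1 = q2 then Fm K zl v p2 q1 else 0) -
        (((u - v)⁻¹ • if p1 = q2 then Fm K zl u p2 q1 else 0) +
          (u - v)⁻¹ • if p2 = q1 then Fm K zl v p1 q2 else 0) +
      ((u + v)⁻¹ • (∑ r, (K r p2 * K⁻¹ q2 q1) • Fm K zl u p1 r -
            ∑ r, (K p1 r * K⁻¹ q2 q1) • Fm K zl v p2 r) -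
        ((u + v)⁻¹ • ∑ r, (K p1 p2 * K⁻¹ q2 r) • Fm K zl u r q1 -
          (u + v)⁻¹ • ∑ r, (K p1 p2 * K⁻¹ r q1) • Fm K zl v r q2)) := by
  have hF : ∀ (w : ℂ) (i j : Fin N), Fm K zl w i j
      = (w - zl)⁻¹ • vecMulVec (Pi.single j (1:ℂ)) (Pi.single i (1:ℂ))
        + (-w - zl)⁻¹ • vecMulVec (fun t => K i t) (fun t => K⁻¹ t j) := by
    intro w i j; rw [Fm, std_eq_vmv]
  have prod : ∀ (a1 b1 c1 d1 : ℂ) (i1 j1 i2 j2 : Fin N),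
      (a1 • vecMulVec (Pi.single j1 (1:ℂ)) (Pi.single i1 (1:ℂ))
          + b1 • vecMulVec (fun t => K i1 t) (fun t => K⁻¹ t j1))
        * (c1 • vecMulVec (Pi.single j2 (1:ℂ)) (Pi.single i2 (1:ℂ))
          + d1 • vecMulVec (fun t => K i2 t) (fun t => K⁻¹ t j2))
      = (a1 * c1 * (if i1 = j2 then 1 else 0)) •
            vecMulVec (Pi.single j1 (1:ℂ)) (Pi.single i2 (1:ℂ))
        + (a1 * d1 * K i2 i1) • vecMulVec (Pi.single j1 (1:ℂ)) (fun t => K⁻¹ t j2)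
        + (b1 * c1 * K⁻¹ j2 j1) • vecMulVec (fun t => K i1 t) (Pi.single i2 (1:ℂ))
        + (b1 * d1 * (if i2 = j1 then 1 else 0)) •
            vecMulVec (fun t => K i1 t) (fun t => K⁻¹ t j2) := by
    intro a1 b1 c1 d1 i1 j1 i2 j2
    simp only [add_mul, Matrix.mul_add, Matrix.smul_mul, Matrix.mul_smul]
    simp only [vmv_mul]
    rw [dot_ee, dot_eK, dot_Kie, dot_KiK K hKinv]
    module
  have T1 : ∑ r, (K r p2 * K⁻¹ q2 q1) •
        ((u - zl)⁻¹ • vecMulVec (Pi.single r (1:ℂ)) (Pi.single p1 (1:ℂ))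
          + (-u - zl)⁻¹ • vecMulVec (fun t => K p1 t) (fun t => K⁻¹ t r))
      = (K⁻¹ q2 q1 * (u - zl)⁻¹ * η) • vecMulVec (fun t => K p2 t) (Pi.single p1 (1:ℂ))
        + (K⁻¹ q2 q1 * (-u - zl)⁻¹) • vecMulVec (fun t => K p1 t) (Pi.single p2 (1:ℂ)) := by
    have e1 : ∀ r : Fin N, (K r p2 * K⁻¹ q2 q1) •
          ((u - zl)⁻¹ • vecMulVec (Pi.single r (1:ℂ)) (Pi.single p1 (1:ℂ))
            + (-u - zl)⁻¹ • vecMulVec (fun t => K p1 t) (fun t => K⁻¹ t r))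
        = (K⁻¹ q2 q1 * (u - zl)⁻¹) •
              (K r p2 • vecMulVec (Pi.single r (1:ℂ)) (Pi.single p1 (1:ℂ)))
          + (K⁻¹ q2 q1 * (-u - zl)⁻¹) •
              (K r p2 • vecMulVec (fun t => K p1 t) (fun t => K⁻¹ t r)) := fun r => by
      module
    simp only [e1]
    rw [Finset.sum_add_distrib, ← Finset.smul_sum, ← Finset.smul_sum, sumP1, sumP2 K hKinv]
    have e2 : (fun x => K x p2) = fun t => η * K p2 t :=
      funext fun t => K_sym K η hKt p2 t
    rw [e2, vmv_smul_left]
    module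
  have T2 : ∑ r, (K p1 r * K⁻¹ q2 q1) •
        ((v - zl)⁻¹ • vecMulVec (Pi.single r (1:ℂ)) (Pi.single p2 (1:ℂ))
          + (-v - zl)⁻¹ • vecMulVec (fun t => K p2 t) (fun t => K⁻¹ t r))
      = (K⁻¹ q2 q1 * (v - zl)⁻¹) • vecMulVec (fun t => K p1 t) (Pi.single p2 (1:ℂ))
        + (K⁻¹ q2 q1 * (-v - zl)⁻¹ * η) • vecMulVec (fun t => K p2 t) (Pi.single p1 (1:ℂ)) := by
    have e1 : ∀ r : Fin N, (K p1 r * K⁻¹ q2 q1) •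
          ((v - zl)⁻¹ • vecMulVec (Pi.single r (1:ℂ)) (Pi.single p2 (1:ℂ))
            + (-v - zl)⁻¹ • vecMulVec (fun t => K p2 t) (fun t => K⁻¹ t r))
        = (K⁻¹ q2 q1 * (v - zl)⁻¹) •
              (K p1 r • vecMulVec (Pi.single r (1:ℂ)) (Pi.single p2 (1:ℂ)))
          + (K⁻¹ q2 q1 * (-v - zl)⁻¹) •
              (K p1 r • vecMulVec (fun t => K p2 t) (fun t => K⁻¹ t r)) := fun r => by
      module
    simp only [e1]
    rw [Finset.sum_add_distrib, ← Finset.smul_sum, ← Finset.smul_sum, sumP3,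
      sumP4 K η hη2 hKinv hKt]
    module
  have T3 : ∑ r, (K p1 p2 * K⁻¹ q2 r) •
        ((u - zl)⁻¹ • vecMulVec (Pi.single q1 (1:ℂ)) (Pi.single r (1:ℂ))
          + (-u - zl)⁻¹ • vecMulVec (fun t => K r t) (fun t => K⁻¹ t q1))
      = (K p1 p2 * (u - zl)⁻¹ * η) • vecMulVec (Pi.single q1 (1:ℂ)) (fun t => K⁻¹ t q2)
        + (K p1 p2 * (-u - zl)⁻¹) • vecMulVec (Pi.single q2 (1:ℂ)) (fun t => K⁻¹ t q1) := by
    have e1 : ∀ r : Fin N, (K p1 p2 * K⁻¹ q2 r) •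
          ((u - zl)⁻¹ • vecMulVec (Pi.single q1 (1:ℂ)) (Pi.single r (1:ℂ))
            + (-u - zl)⁻¹ • vecMulVec (fun t => K r t) (fun t => K⁻¹ t q1))
        = (K p1 p2 * (u - zl)⁻¹) •
              (K⁻¹ q2 r • vecMulVec (Pi.single q1 (1:ℂ)) (Pi.single r (1:ℂ)))
          + (K p1 p2 * (-u - zl)⁻¹) •
              (K⁻¹ q2 r • vecMulVec (fun t => K r t) (fun t => K⁻¹ t q1)) := fun r => by
      module
    simp only [e1]
    rw [Finset.sum_add_distrib, ← Finset.smul_sum, ← Finset.smul_sum, sumP5,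
      sumP6 K hKinv]
    have e2 : (fun y => K⁻¹ q2 y) = fun t => η * K⁻¹ t q2 :=
      funext fun t => Kinv_sym K η hη2 hKinv hKt t q2
    rw [e2, vmv_smul_right]
    module
  have T4 : ∑ r, (K p1 p2 * K⁻¹ r q1) •
        ((v - zl)⁻¹ • vecMulVec (Pi.single q2 (1:ℂ)) (Pi.single r (1:ℂ))
          + (-v - zl)⁻¹ • vecMulVec (fun t => K r t) (fun t => K⁻¹ t q2))
      = (K p1 p2 * (v - zl)⁻¹) • vecMulVec (Pi.single q2 (1:ℂ)) (fun t => K⁻¹ t q1)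
        + (K p1 p2 * (-v - zl)⁻¹ * η) • vecMulVec (Pi.single q1 (1:ℂ)) (fun t => K⁻¹ t q2) := by
    have e1 : ∀ r : Fin N, (K p1 p2 * K⁻¹ r q1) •
          ((v - zl)⁻¹ • vecMulVec (Pi.single q2 (1:ℂ)) (Pi.single r (1:ℂ))
            + (-v - zl)⁻¹ • vecMulVec (fun t => K r t) (fun t => K⁻¹ t q2))
        = (K p1 p2 * (v - zl)⁻¹) •
              (K⁻¹ r q1 • vecMulVec (Pi.single q2 (1:ℂ)) (Pi.single r (1:ℂ)))
          + (K p1 p2 * (-v - zl)⁻¹) •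
              (K⁻¹ r q1 • vecMulVec (fun t => K r t) (fun t => K⁻¹ t q2)) := fun r => by
      module
    simp only [e1]
    rw [Finset.sum_add_distrib, ← Finset.smul_sum, ← Finset.smul_sum, sumP7,
      sumP8 K η hη2 hKinv hKt]
    module
  simp only [hF]
  rw [prod, prod, T1, T2, T3, T4]
  rw [K_sym K η hKt p1 p2, Kinv_sym K η hη2 hKinv hKt q2 q1]
  by_cases hA : p2 = q1 <;> by_cases hB : p1 = q2 <;>
    simp only [hA, hB, eq_self_iff_true, if_true, if_false, ite_true, ite_false,
      smul_zero, add_zero, zero_add, sub_zero, mul_one, mul_zero] <;>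
    match_scalars <;>
    field_simp [h1, h2, h3, h4, h5, h6] <;>
    ring

end Key

section Assemble
variable (z : Fin L → ℂ) (K : Matrix (Fin N) (Fin N) ℂ)

lemma theta_ite (c : Prop) [Decidable c] (f : Fin L → Matrix (Fin N) (Fin N) ℂ) :
    (if c then ∑ ℓ, siteL ρ ℓ (f ℓ) else 0) = ∑ ℓ, siteL ρ ℓ (if c then f ℓ else 0) := by
  split
  · rfl
  · exact (Finset.sum_eq_zero fun ℓ _ => map_zero _).symm

lemma theta_smul (c : ℂ) (f : Fin L → Matrix (Fin N) (Fin N) ℂ) :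
    c • ∑ ℓ, siteL ρ ℓ (f ℓ) = ∑ ℓ, siteL ρ ℓ (c • f ℓ) := by
  rw [Finset.smul_sum]
  exact Finset.sum_congr rfl fun ℓ _ => (LinearMap.map_smul _ _ _).symm

lemma theta_sumr (c : Fin N → ℂ) (f : Fin N → Fin L → Matrix (Fin N) (Fin N) ℂ) :
    ∑ r, c r • ∑ ℓ, siteL ρ ℓ (f r ℓ) = ∑ ℓ, siteL ρ ℓ (∑ r, c r • f r ℓ) := by
  simp only [Finset.smul_sum]
  rw [Finset.sum_comm]
  refine Finset.sum_congr rfl fun ℓ _ => ?_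
  rw [map_sum]
  refine Finset.sum_congr rfl fun r _ => (LinearMap.map_smul _ _ _).symm

lemma theta_sumswap (f : Fin N → Fin L → Matrix (Fin N) (Fin N) ℂ) :
    ∑ r : Fin N, ∑ ℓ, siteL ρ ℓ (f r ℓ) = ∑ ℓ, siteL ρ ℓ (∑ r, f r ℓ) := by
  rw [Finset.sum_comm]
  exact Finset.sum_congr rfl fun ℓ _ => (map_sum _ _ _).symm

lemma theta_add (f g : Fin L → Matrix (Fin N) (Fin N) ℂ) :
    ((∑ ℓ, siteL ρ ℓ (f ℓ)) + ∑ ℓ, siteL ρ ℓ (g ℓ)) = ∑ ℓ, siteL ρ ℓ (f ℓ + g ℓ) := by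
  rw [← Finset.sum_add_distrib]
  exact Finset.sum_congr rfl fun ℓ _ => (LinearMap.map_add _ _ _).symm

lemma theta_sub (f g : Fin L → Matrix (Fin N) (Fin N) ℂ) :
    ((∑ ℓ, siteL ρ ℓ (f ℓ)) - ∑ ℓ, siteL ρ ℓ (g ℓ)) = ∑ ℓ, siteL ρ ℓ (f ℓ - g ℓ) := by
  rw [← Finset.sum_sub_distrib]
  exact Finset.sum_congr rfl fun ℓ _ => (LinearMap.map_sub _ _ _).symm

end Assemble

/-- (i) The exchange relations of the outer-twisted (twisted Yangian, classical limit)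
algebra: `[S(u)_a, S(v)_b] = [S(u)_a + S(v)_b, (u−v)⁻¹ P_{ab}] + [S(u)_a − S(v)_b, (u+v)⁻¹ Q_{ab}]`
with `Q_{ab} = K_a P_{ab}^{t_a} K_a⁻¹`; and (ii) `K_a P_{ab}^{t_a} K_a⁻¹ = K_b P_{ab}^{t_b} K_b⁻¹`. -/
theorem statement10
    (hN : 1 ≤ N) (hL : 1 ≤ L)
    (hρ : ∀ ℓ (X Y : Matrix (Fin N) (Fin N) ℂ),
      ρ ℓ (X * Y - Y * X) = ρ ℓ X * ρ ℓ Y - ρ ℓ Y * ρ ℓ X)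
    (z : Fin L → ℂ) (hz : Function.Injective z)
    (η : ℂ) (hη : η = 1 ∨ η = -1)
    (K : Matrix (Fin N) (Fin N) ℂ) (hKre : ∀ i j, (K i j).im = 0)
    (hKinv : IsUnit K.det) (hKt : Kᵀ = η • K)
    (u v : ℂ) (hu : ∀ ℓ, u ≠ z ℓ ∧ -u ≠ z ℓ) (hv : ∀ ℓ, v ≠ z ℓ ∧ -v ≠ z ℓ)
    (huv : u ≠ v) (huv' : u ≠ -v) :
    (aM (Sm ρ z K u) * bM (Sm ρ z K v) - bM (Sm ρ z K v) * aM (Sm ρ z K u) =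
      ((aM (Sm ρ z K u) + bM (Sm ρ z K v)) * ((u - v)⁻¹ • PP N (Module.End ℂ (⨂[ℂ] i, V i)))
        - ((u - v)⁻¹ • PP N (Module.End ℂ (⨂[ℂ] i, V i))) * (aM (Sm ρ z K u) + bM (Sm ρ z K v)))
      + ((aM (Sm ρ z K u) - bM (Sm ρ z K v)) *
            ((u + v)⁻¹ • (aM (emb V K) * ptA (PP N (Module.End ℂ (⨂[ℂ] i, V i))) * aM (emb V K⁻¹)))
          - ((u + v)⁻¹ • (aM (emb V K) * ptA (PP N (Module.End ℂ (⨂[ℂ] i, V i))) * aM (emb V K⁻¹))) *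
            (aM (Sm ρ z K u) - bM (Sm ρ z K v))))
    ∧
    aM (emb V K) * ptA (PP N (Module.End ℂ (⨂[ℂ] i, V i))) * aM (emb V K⁻¹) =
      bM (emb V K) * ptB (PP N (Module.End ℂ (⨂[ℂ] i, V i))) * bM (emb V K⁻¹) := by
  have hη2 : η * η = 1 := by rcases hη with h | h <;> simp [h]
  constructor
  · refine Matrix.ext fun p q => ?_
    simp only [Matrix.mul_smul, Matrix.smul_mul, Matrix.add_mul, Matrix.mul_add,
      Matrix.sub_mul, Matrix.mul_sub]
    simp only [Matrix.sub_apply, Matrix.add_apply, Matrix.smul_apply]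
    rw [aM_mul_bM, bM_mul_aM, aM_mul_PP, PP_mul_aM, bM_mul_PP, PP_mul_bM,
      aM_mul_Q, Q_mul_aM, bM_mul_Q, Q_mul_bM]
    simp only [Sm_apply]
    rw [bracket_sum ρ hρ]
    simp only [theta_ite, theta_smul, theta_sumr, theta_sumswap, theta_add, theta_sub]
    refine Finset.sum_congr rfl fun ℓ _ => congrArg _ ?_
    exact keyClaim K η hη2 hKinv hKt u v (z ℓ)
      (sub_ne_zero_of_ne (hu ℓ).1) (sub_ne_zero_of_ne (hu ℓ).2)
      (sub_ne_zero_of_ne (hv ℓ).1) (sub_ne_zero_of_ne (hv ℓ).2)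
      (sub_ne_zero_of_ne huv) (fun h => huv' (by linear_combination h))
      p.1 p.2 q.1 q.2
  · exact part_two K η hη2 hKinv hKt
end
end

section
/- If X ∈ gl_N(ℂ) satisfies K X^t K^{−1} = −X, then for every k = 1,…,L one has [Σ_{ℓ=1}^L X^{(ℓ)}, H_k^η] = 0; i.e. the outer-twisted Gaudin model has the Lie algebra {X ∈ gl_N(ℂ) : K X^t K^{−1} = −X} (isomorphic to so(p,q) for η = +1 and to sp(N) for η = −1) as a symmetry algebra. -/
open Matrix
open scoped TensorProduct

noncomputable section

variable {N L : ℕ}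
variable {V : Fin L → Type} [∀ ℓ, AddCommGroup (V ℓ)] [∀ ℓ, Module ℂ (V ℓ)]
variable (ρ : ∀ ℓ, Matrix (Fin N) (Fin N) ℂ →ₗ[ℂ] Module.End ℂ (V ℓ))

/-- `𝐐_{aℓ} = K 𝐏_{aℓ}^{t_a} K⁻¹`. -/
def Qm (K : Matrix (Fin N) (Fin N) ℂ) (ℓ : Fin L) :
    Matrix (Fin N) (Fin N) (Module.End ℂ (⨂[ℂ] i, V i)) :=
  emb V K * (Pm ρ ℓ)ᵀ * emb V K⁻¹

/-- The outer-twisted Gaudin Hamiltonian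
`H_k^η = Σ_{j≠k} [(z_k−z_j)⁻¹ tr_a(𝐏_{ak}𝐏_{aj}) + (z_k+z_j)⁻¹ tr_a(𝐏_{ak}𝐐_{aj})]
  + (2z_k)⁻¹ tr_a(𝐏_{ak}𝐐_{ak})`. -/
def Hout (z : Fin L → ℂ) (K : Matrix (Fin N) (Fin N) ℂ) (k : Fin L) :
    Module.End ℂ (⨂[ℂ] i, V i) :=
  (∑ j ∈ Finset.univ.filter (fun j => j ≠ k),
      ((z k - z j)⁻¹ • (Pm ρ k * Pm ρ j).trace
        + (z k + z j)⁻¹ • (Pm ρ k * Qm ρ K j).trace))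
    + (2 * z k)⁻¹ • (Pm ρ k * Qm ρ K k).trace

/-! ### Auxiliary development for `statement16` -/

section Aux16

/-- Single-site operator from an endomorphism of one factor. -/
def sOp16 (ℓ : Fin L) (f : Module.End ℂ (V ℓ)) : Module.End ℂ (⨂[ℂ] i, V i) :=
  PiTensorProduct.map (Function.update (fun i => (LinearMap.id : V i →ₗ[ℂ] V i)) ℓ f)

lemma siteOp_eq_sOp16 (ℓ : Fin L) (X : Matrix (Fin N) (Fin N) ℂ) :
    siteOp ρ ℓ X = sOp16 ℓ (ρ ℓ X) := rfl

lemma sOp16_mul (ℓ : Fin L) (f g : Module.End ℂ (V ℓ)) :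
    sOp16 (V := V) ℓ f * sOp16 ℓ g = sOp16 ℓ (f * g) := by
  unfold sOp16
  ext x
  simp only [LinearMap.compMultilinearMap_apply, Module.End.mul_apply,
    PiTensorProduct.map_tprod]
  congr 1
  funext i
  rcases eq_or_ne i ℓ with rfl | hi
  · simp
  · simp [Function.update_of_ne hi]

lemma sOp16_comm {ℓ m : Fin L} (h : ℓ ≠ m) (f : Module.End ℂ (V ℓ))
    (g : Module.End ℂ (V m)) :
    sOp16 (V := V) ℓ f * sOp16 m g = sOp16 m g * sOp16 ℓ f := by
  unfold sOp16
  ext x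
  simp only [LinearMap.compMultilinearMap_apply, Module.End.mul_apply,
    PiTensorProduct.map_tprod]
  congr 1
  funext i
  rcases eq_or_ne i ℓ with rfl | hi
  · simp [Function.update_of_ne h]
  · rcases eq_or_ne i m with rfl | hm
    · simp [Function.update_of_ne hi, Function.update_of_ne h.symm]
    · simp [Function.update_of_ne hi, Function.update_of_ne hm]

lemma sOp16_add (ℓ : Fin L) (f g : Module.End ℂ (V ℓ)) :
    sOp16 (V := V) ℓ (f + g) = sOp16 ℓ f + sOp16 ℓ g :=
  PiTensorProduct.map_update_add _ ℓ f g

lemma sOp16_smul (ℓ : Fin L) (c : ℂ) (f : Module.End ℂ (V ℓ)) :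
    sOp16 (V := V) ℓ (c • f) = c • sOp16 ℓ f :=
  PiTensorProduct.map_update_smul _ ℓ c f

lemma sOp16_sub (ℓ : Fin L) (f g : Module.End ℂ (V ℓ)) :
    sOp16 (V := V) ℓ (f - g) = sOp16 ℓ f - sOp16 ℓ g := by
  have h := sOp16_add (V := V) ℓ (f - g) g
  rw [sub_add_cancel] at h
  rw [h]; abel

/-- `siteOp ρ ℓ` as a linear map in the matrix argument. -/
def siteOpL (ℓ : Fin L) : Matrix (Fin N) (Fin N) ℂ →ₗ[ℂ] Module.End ℂ (⨂[ℂ] i, V i) where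
  toFun := siteOp ρ ℓ
  map_add' A B := by
    show siteOp ρ ℓ (A + B) = siteOp ρ ℓ A + siteOp ρ ℓ B
    rw [siteOp_eq_sOp16, map_add, sOp16_add]; rfl
  map_smul' c A := by
    show siteOp ρ ℓ (c • A) = c • siteOp ρ ℓ A
    rw [siteOp_eq_sOp16, _root_.map_smul, sOp16_smul]; rfl

@[simp] lemma siteOpL_apply (ℓ : Fin L) (A : Matrix (Fin N) (Fin N) ℂ) :
    siteOpL ρ ℓ A = siteOp ρ ℓ A := rfl

section Sums

variable {n : ℕ}

lemma sum3_swap13 {M : Type*} [AddCommMonoid M] (g : Fin n → Fin n → Fin n → M) :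
    (∑ a, ∑ b, ∑ c, g a b c) = ∑ c, ∑ b, ∑ a, g a b c :=
  calc (∑ a, ∑ b, ∑ c, g a b c)
      = ∑ b, ∑ a, ∑ c, g a b c := Finset.sum_comm
    _ = ∑ b, ∑ c, ∑ a, g a b c := Finset.sum_congr rfl fun _ _ => Finset.sum_comm
    _ = ∑ c, ∑ b, ∑ a, g a b c := Finset.sum_comm

lemma sum3_swap23 {M : Type*} [AddCommMonoid M] (g : Fin n → Fin n → Fin n → M) :
    (∑ a, ∑ b, ∑ c, g a b c) = ∑ a, ∑ c, ∑ b, g a b c :=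
  Finset.sum_congr rfl fun _ _ => Finset.sum_comm

lemma sum4_rev {M : Type*} [AddCommMonoid M] (g : Fin n → Fin n → Fin n → Fin n → M) :
    (∑ a, ∑ b, ∑ c, ∑ d, g a b c d) = ∑ d, ∑ c, ∑ b, ∑ a, g a b c d :=
  calc (∑ a, ∑ b, ∑ c, ∑ d, g a b c d)
      = ∑ b, ∑ a, ∑ c, ∑ d, g a b c d := Finset.sum_comm
    _ = ∑ b, ∑ c, ∑ a, ∑ d, g a b c d := Finset.sum_congr rfl fun _ _ => Finset.sum_comm
    _ = ∑ c, ∑ b, ∑ a, ∑ d, g a b c d := Finset.sum_comm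
    _ = ∑ c, ∑ b, ∑ d, ∑ a, g a b c d :=
        Finset.sum_congr rfl fun _ _ => Finset.sum_congr rfl fun _ _ => Finset.sum_comm
    _ = ∑ c, ∑ d, ∑ b, ∑ a, g a b c d := Finset.sum_congr rfl fun _ _ => Finset.sum_comm
    _ = ∑ d, ∑ c, ∑ b, ∑ a, g a b c d := Finset.sum_comm

end Sums

section MatrixLemmas

variable {n : ℕ}

lemma mul_stdBasis16 (X : Matrix (Fin n) (Fin n) ℂ) (p q : Fin n) :
    X * single p q (1 : ℂ) = ∑ m, X m p • single m q (1 : ℂ) := by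
  ext c d
  simp [Matrix.mul_apply, Matrix.single, Matrix.sum_apply, ite_and,
    mul_ite, ite_mul, Finset.sum_ite_eq, Finset.sum_ite_eq']

lemma stdBasis_mul16 (X : Matrix (Fin n) (Fin n) ℂ) (p q : Fin n) :
    single p q (1 : ℂ) * X = ∑ d, X q d • single p d (1 : ℂ) := by
  ext c d
  simp [Matrix.mul_apply, Matrix.single, Matrix.sum_apply, ite_and,
    mul_ite, ite_mul, Finset.sum_ite_eq, Finset.sum_ite_eq']

lemma stdBasis_transpose16 (p q : Fin n) :
    (single p q (1 : ℂ))ᵀ = single q p (1 : ℂ) := by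
  ext c d
  simp [Matrix.single, and_comm]

lemma KEK16 (K : Matrix (Fin n) (Fin n) ℂ) (K' : Matrix (Fin n) (Fin n) ℂ) (p q : Fin n) :
    K * single p q (1 : ℂ) * K' =
      ∑ m, ∑ i, (K m p * K' q i) • single m i (1 : ℂ) := by
  ext c d
  simp [Matrix.mul_apply, Matrix.single, Matrix.sum_apply, ite_and,
    mul_ite, ite_mul, Finset.sum_ite_eq, Finset.sum_ite_eq']

end MatrixLemmas

/-- The key `gl_N`-invariance identity for an arbitrary bilinear map. -/
lemma key_invariance16 {M : Type*} [AddCommGroup M] [Module ℂ M]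
    (B : Matrix (Fin N) (Fin N) ℂ →ₗ[ℂ] Matrix (Fin N) (Fin N) ℂ →ₗ[ℂ] M)
    (X : Matrix (Fin N) (Fin N) ℂ) :
    (∑ p : Fin N, ∑ q : Fin N,
      (B (X * single p q 1 - single p q 1 * X) (single q p 1)
        + B (single p q 1)
            (X * single q p 1 - single q p 1 * X))) = 0 := by
  have h14 : (∑ p : Fin N, ∑ q : Fin N, ∑ m : Fin N,
        X m p • B (single m q 1) (single q p 1))
      = ∑ p : Fin N, ∑ q : Fin N, ∑ d : Fin N,
        X p d • B (single p q 1) (single q d 1) :=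
    sum3_swap13 (fun a b c => X c a • B (single c b 1) (single b a 1))
  have h23 : (∑ p : Fin N, ∑ q : Fin N, ∑ d : Fin N,
        X q d • B (single p d 1) (single q p 1))
      = ∑ p : Fin N, ∑ q : Fin N, ∑ m : Fin N,
        X m q • B (single p q 1) (single m p 1) :=
    sum3_swap23 (fun a b c => X b c • B (single a c 1) (single b a 1))
  calc (∑ p : Fin N, ∑ q : Fin N,
      (B (X * single p q 1 - single p q 1 * X) (single q p 1)
        + B (single p q 1)
            (X * single q p 1 - single q p 1 * X)))
      = (∑ p : Fin N, ∑ q : Fin N,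
          (((∑ m, X m p • B (single m q 1) (single q p 1))
            - ∑ d, X q d • B (single p d 1) (single q p 1))
          + ((∑ m, X m q • B (single p q 1) (single m p 1))
            - ∑ d, X p d • B (single p q 1) (single q d 1)))) := by
        refine Finset.sum_congr rfl fun p _ => Finset.sum_congr rfl fun q _ => ?_
        rw [mul_stdBasis16, stdBasis_mul16, mul_stdBasis16, stdBasis_mul16]
        simp only [map_sub, map_sum, _root_.map_smul, LinearMap.sub_apply,
          LinearMap.sum_apply, LinearMap.smul_apply]
    _ = ((∑ p : Fin N, ∑ q : Fin N, ∑ m : Fin N,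
            X m p • B (single m q 1) (single q p 1))
          - ∑ p : Fin N, ∑ q : Fin N, ∑ d : Fin N,
            X q d • B (single p d 1) (single q p 1))
        + ((∑ p : Fin N, ∑ q : Fin N, ∑ m : Fin N,
            X m q • B (single p q 1) (single m p 1))
          - ∑ p : Fin N, ∑ q : Fin N, ∑ d : Fin N,
            X p d • B (single p q 1) (single q d 1)) := by
        simp only [Finset.sum_add_distrib, Finset.sum_sub_distrib]
    _ = 0 := by rw [h14, h23]; abel

/-- Commutator of `∑ ℓ, X^{(ℓ)}` with a single site operator. -/
lemma comm_siteOp_sum16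
    (hρ : ∀ ℓ (X Y : Matrix (Fin N) (Fin N) ℂ),
      ρ ℓ (X * Y - Y * X) = ρ ℓ X * ρ ℓ Y - ρ ℓ Y * ρ ℓ X)
    (X A : Matrix (Fin N) (Fin N) ℂ) (j : Fin L) :
    (∑ ℓ, siteOp ρ ℓ X) * siteOp ρ j A - siteOp ρ j A * (∑ ℓ, siteOp ρ ℓ X)
      = siteOp ρ j (X * A - A * X) := by
  rw [Finset.sum_mul, Finset.mul_sum, ← Finset.sum_sub_distrib]
  rw [Finset.sum_eq_single j]
  · simp only [siteOp_eq_sOp16, sOp16_mul, hρ j, ← sOp16_sub]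
  · intro b _ hb
    rw [siteOp_eq_sOp16, siteOp_eq_sOp16, sOp16_comm hb, sub_self]
  · intro h
    exact absurd (Finset.mem_univ j) h

/-- Commutator of `∑ ℓ, X^{(ℓ)}` with a product of two site operators. -/
lemma comm_pair16
    (hρ : ∀ ℓ (X Y : Matrix (Fin N) (Fin N) ℂ),
      ρ ℓ (X * Y - Y * X) = ρ ℓ X * ρ ℓ Y - ρ ℓ Y * ρ ℓ X)
    (X A B : Matrix (Fin N) (Fin N) ℂ) (k j : Fin L) :
    (∑ ℓ, siteOp ρ ℓ X) * (siteOp ρ k A * siteOp ρ j B)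
      - (siteOp ρ k A * siteOp ρ j B) * (∑ ℓ, siteOp ρ ℓ X)
      = siteOp ρ k (X * A - A * X) * siteOp ρ j B
        + siteOp ρ k A * siteOp ρ j (X * B - B * X) := by
  set S := ∑ ℓ, siteOp ρ ℓ X with hS
  have leib : S * (siteOp ρ k A * siteOp ρ j B) - (siteOp ρ k A * siteOp ρ j B) * S
      = (S * siteOp ρ k A - siteOp ρ k A * S) * siteOp ρ j B
        + siteOp ρ k A * (S * siteOp ρ j B - siteOp ρ j B * S) := by
    simp only [sub_mul, mul_sub, mul_assoc]; abel
  rw [leib, comm_siteOp_sum16 ρ hρ X A k, comm_siteOp_sum16 ρ hρ X B j]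

/-- Expansion of `tr_a(𝐏_{ak}𝐏_{aj})` as a double sum of site operators. -/
lemma trace_PP16 (k j : Fin L) :
    (Pm ρ k * Pm ρ j).trace
      = ∑ p : Fin N, ∑ q : Fin N,
          siteOp ρ k (single p q 1) * siteOp ρ j (single q p 1) := by
  calc (Pm ρ k * Pm ρ j).trace
      = ∑ i : Fin N, ∑ m : Fin N,
          siteOp ρ k (single m i 1) * siteOp ρ j (single i m 1) := by
        simp [Matrix.trace, Matrix.diag, Matrix.mul_apply, Pm]
    _ = _ := Finset.sum_comm

/-- Expansion of `tr_a(𝐏_{ak}𝐐_{aj})` as a double sum of site operators. -/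
lemma trace_PQ16 (K : Matrix (Fin N) (Fin N) ℂ) (k j : Fin L) :
    (Pm ρ k * Qm ρ K j).trace
      = ∑ p : Fin N, ∑ q : Fin N,
          siteOp ρ k (K * single p q 1 * K⁻¹)
            * siteOp ρ j (single p q 1) := by
  have hQ : ∀ m i, Qm ρ K j m i
      = ∑ q, ∑ p, (K m p * K⁻¹ q i) • siteOp ρ j (single p q 1) := by
    intro m i
    show (emb V K * (Pm ρ j)ᵀ * emb V K⁻¹) m i = _
    simp only [Matrix.mul_apply, emb, Matrix.map_apply, Matrix.transpose_apply, Pm,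
      Matrix.of_apply, Algebra.algebraMap_eq_smul_one, smul_mul_assoc, one_mul,
      mul_smul_comm, mul_one, Finset.sum_mul, smul_smul]
    refine Finset.sum_congr rfl fun q _ => ?_
    rw [Finset.smul_sum]
    refine Finset.sum_congr rfl fun p _ => ?_
    rw [smul_smul, mul_comm]
  calc (Pm ρ k * Qm ρ K j).trace
      = ∑ i : Fin N, ∑ m : Fin N,
          siteOp ρ k (single m i 1) * Qm ρ K j m i := by
        simp [Matrix.trace, Matrix.diag, Matrix.mul_apply, Pm]
    _ = ∑ i : Fin N, ∑ m : Fin N, ∑ q : Fin N, ∑ p : Fin N, (K m p * K⁻¹ q i) •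
          (siteOp ρ k (single m i 1) * siteOp ρ j (single p q 1)) := by
        simp only [hQ, Finset.mul_sum, mul_smul_comm]
    _ = ∑ p : Fin N, ∑ q : Fin N, ∑ m : Fin N, ∑ i : Fin N, (K m p * K⁻¹ q i) •
          (siteOp ρ k (single m i 1) * siteOp ρ j (single p q 1)) :=
        sum4_rev _
    _ = ∑ p : Fin N, ∑ q : Fin N,
          siteOp ρ k (K * single p q 1 * K⁻¹)
            * siteOp ρ j (single p q 1) := by
        refine Finset.sum_congr rfl fun p _ => Finset.sum_congr rfl fun q _ => ?_
        symm
        rw [← siteOpL_apply ρ k, KEK16, map_sum, Finset.sum_mul]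
        refine Finset.sum_congr rfl fun m _ => ?_
        rw [map_sum, Finset.sum_mul]
        refine Finset.sum_congr rfl fun i _ => ?_
        rw [_root_.map_smul, smul_mul_assoc, siteOpL_apply]

/-- Commutator of `∑ ℓ, X^{(ℓ)}` with a double sum of products of site operators. -/
lemma comm_sum_pairs16
    (hρ : ∀ ℓ (X Y : Matrix (Fin N) (Fin N) ℂ),
      ρ ℓ (X * Y - Y * X) = ρ ℓ X * ρ ℓ Y - ρ ℓ Y * ρ ℓ X)
    (X : Matrix (Fin N) (Fin N) ℂ)
    (A B : Fin N → Fin N → Matrix (Fin N) (Fin N) ℂ) (k j : Fin L) :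
    (∑ ℓ, siteOp ρ ℓ X) * (∑ p : Fin N, ∑ q : Fin N, siteOp ρ k (A p q) * siteOp ρ j (B p q))
      - (∑ p : Fin N, ∑ q : Fin N, siteOp ρ k (A p q) * siteOp ρ j (B p q))
          * (∑ ℓ, siteOp ρ ℓ X)
      = ∑ p : Fin N, ∑ q : Fin N,
          (siteOp ρ k (X * A p q - A p q * X) * siteOp ρ j (B p q)
            + siteOp ρ k (A p q) * siteOp ρ j (X * B p q - B p q * X)) := by
  rw [Finset.mul_sum, Finset.sum_mul, ← Finset.sum_sub_distrib]
  refine Finset.sum_congr rfl fun p _ => ?_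
  rw [Finset.mul_sum, Finset.sum_mul, ← Finset.sum_sub_distrib]
  exact Finset.sum_congr rfl fun q _ => comm_pair16 ρ hρ X (A p q) (B p q) k j

lemma siteOp_add16 (ℓ : Fin L) (A B : Matrix (Fin N) (Fin N) ℂ) :
    siteOp ρ ℓ (A + B) = siteOp ρ ℓ A + siteOp ρ ℓ B :=
  map_add (siteOpL ρ ℓ) A B

lemma siteOp_smul16 (ℓ : Fin L) (c : ℂ) (A : Matrix (Fin N) (Fin N) ℂ) :
    siteOp ρ ℓ (c • A) = c • siteOp ρ ℓ A :=
  _root_.map_smul (siteOpL ρ ℓ) c A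

/-- Bilinear map `(M, N') ↦ M^{(k)} N'^{(j)}`. -/
def Bpair16 (k j : Fin L) :
    Matrix (Fin N) (Fin N) ℂ →ₗ[ℂ] Matrix (Fin N) (Fin N) ℂ →ₗ[ℂ]
      Module.End ℂ (⨂[ℂ] i, V i) :=
  LinearMap.mk₂ ℂ (fun M N' => siteOpL ρ k M * siteOpL ρ j N')
    (fun a b c => by simp [siteOp_add16, add_mul])
    (fun c a b => by simp [siteOp_smul16, smul_mul_assoc])
    (fun a b c => by simp [siteOp_add16, mul_add])
    (fun c a b => by simp [siteOp_smul16, mul_smul_comm])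

/-- Bilinear map `(M, N') ↦ (K N'ᵀ K⁻¹)^{(k)} M^{(j)}`. -/
def Btw16 (K : Matrix (Fin N) (Fin N) ℂ) (k j : Fin L) :
    Matrix (Fin N) (Fin N) ℂ →ₗ[ℂ] Matrix (Fin N) (Fin N) ℂ →ₗ[ℂ]
      Module.End ℂ (⨂[ℂ] i, V i) :=
  LinearMap.mk₂ ℂ (fun M N' => siteOpL ρ k (K * N'ᵀ * K⁻¹) * siteOpL ρ j M)
    (fun a b c => by simp [siteOp_add16, mul_add])
    (fun c a b => by simp [siteOp_smul16, mul_smul_comm])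
    (fun a b c => by
      simp [Matrix.transpose_add, Matrix.mul_add, Matrix.add_mul, siteOp_add16, add_mul])
    (fun c a b => by
      simp [Matrix.transpose_smul, Matrix.mul_smul, Matrix.smul_mul, siteOp_smul16,
        smul_mul_assoc])

/-- The key matrix identity from `K Xᵀ K⁻¹ = -X`. -/
lemma twist_id16 (K X : Matrix (Fin N) (Fin N) ℂ) (hKinv : IsUnit K.det)
    (hX : K * Xᵀ * K⁻¹ = -X) (M : Matrix (Fin N) (Fin N) ℂ) :
    K * (X * M - M * X)ᵀ * K⁻¹
      = X * (K * Mᵀ * K⁻¹) - (K * Mᵀ * K⁻¹) * X := by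
  have hK : K⁻¹ * K = 1 := Matrix.nonsing_inv_mul K hKinv
  have hc : ∀ B : Matrix (Fin N) (Fin N) ℂ, K⁻¹ * (K * B) = B := fun B => by
    rw [← Matrix.mul_assoc, hK, Matrix.one_mul]
  have e1 : K * (Mᵀ * Xᵀ) * K⁻¹ = -((K * Mᵀ * K⁻¹) * X) :=
    calc K * (Mᵀ * Xᵀ) * K⁻¹
        = (K * Mᵀ * K⁻¹) * (K * Xᵀ * K⁻¹) := by simp only [Matrix.mul_assoc, hc]
      _ = -((K * Mᵀ * K⁻¹) * X) := by rw [hX, Matrix.mul_neg]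
  have e2 : K * (Xᵀ * Mᵀ) * K⁻¹ = -(X * (K * Mᵀ * K⁻¹)) :=
    calc K * (Xᵀ * Mᵀ) * K⁻¹
        = (K * Xᵀ * K⁻¹) * (K * Mᵀ * K⁻¹) := by simp only [Matrix.mul_assoc, hc]
      _ = -(X * (K * Mᵀ * K⁻¹)) := by rw [hX, Matrix.neg_mul]
  rw [Matrix.transpose_sub, Matrix.transpose_mul, Matrix.transpose_mul,
    Matrix.mul_sub, Matrix.sub_mul, e1, e2]
  abel

/-- `∑ ℓ, X^{(ℓ)}` commutes with `tr_a(𝐏_{ak}𝐏_{aj})`. -/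
lemma comm_tracePP16
    (hρ : ∀ ℓ (X Y : Matrix (Fin N) (Fin N) ℂ),
      ρ ℓ (X * Y - Y * X) = ρ ℓ X * ρ ℓ Y - ρ ℓ Y * ρ ℓ X)
    (X : Matrix (Fin N) (Fin N) ℂ) (k j : Fin L) :
    (∑ ℓ, siteOp ρ ℓ X) * (Pm ρ k * Pm ρ j).trace
      - (Pm ρ k * Pm ρ j).trace * (∑ ℓ, siteOp ρ ℓ X) = 0 := by
  rw [trace_PP16, comm_sum_pairs16 ρ hρ X
    (fun p q => single p q 1) (fun p q => single q p 1) k j]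
  have key := key_invariance16 (Bpair16 ρ k j) X
  simp only [Bpair16, LinearMap.mk₂_apply, siteOpL_apply] at key
  exact key

/-- `∑ ℓ, X^{(ℓ)}` commutes with `tr_a(𝐏_{ak}𝐐_{aj})`. -/
lemma comm_tracePQ16
    (hρ : ∀ ℓ (X Y : Matrix (Fin N) (Fin N) ℂ),
      ρ ℓ (X * Y - Y * X) = ρ ℓ X * ρ ℓ Y - ρ ℓ Y * ρ ℓ X)
    (K X : Matrix (Fin N) (Fin N) ℂ) (hKinv : IsUnit K.det)
    (hX : K * Xᵀ * K⁻¹ = -X) (k j : Fin L) :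
    (∑ ℓ, siteOp ρ ℓ X) * (Pm ρ k * Qm ρ K j).trace
      - (Pm ρ k * Qm ρ K j).trace * (∑ ℓ, siteOp ρ ℓ X) = 0 := by
  rw [trace_PQ16, comm_sum_pairs16 ρ hρ X
    (fun p q => K * single p q 1 * K⁻¹) (fun p q => single p q 1) k j]
  have key := key_invariance16 (Btw16 ρ K k j) X
  simp only [Btw16, LinearMap.mk₂_apply, siteOpL_apply, stdBasis_transpose16,
    twist_id16 K X hKinv hX] at key
  exact Eq.trans
    (Finset.sum_congr rfl fun p _ => Finset.sum_congr rfl fun q _ => add_comm _ _) key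

end Aux16

/-- If `K Xᵀ K⁻¹ = −X` (the Lie algebra isomorphic to `so(p,q)` for `η = +1` and to
`sp(N)` for `η = −1`), then `Σ_ℓ X^{(ℓ)}` commutes with every outer-twisted Gaudin
Hamiltonian `H_k^η`. -/
theorem statement16
    (hN : 1 ≤ N) (hL : 1 ≤ L)
    (hρ : ∀ ℓ (X Y : Matrix (Fin N) (Fin N) ℂ),
      ρ ℓ (X * Y - Y * X) = ρ ℓ X * ρ ℓ Y - ρ ℓ Y * ρ ℓ X)
    (z : Fin L → ℂ) (hz : Function.Injective z)
    (hzz : ∀ k j : Fin L, z k + z j ≠ 0)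
    (η : ℂ) (hη : η = 1 ∨ η = -1)
    (K : Matrix (Fin N) (Fin N) ℂ) (hKre : ∀ i j, (K i j).im = 0)
    (hKinv : IsUnit K.det) (hKt : Kᵀ = η • K)
    (X : Matrix (Fin N) (Fin N) ℂ) (hX : K * Xᵀ * K⁻¹ = -X)
    (k : Fin L) :
    (∑ ℓ : Fin L, siteOp ρ ℓ X) * Hout ρ z K k -
      Hout ρ z K k * (∑ ℓ : Fin L, siteOp ρ ℓ X) = 0 := by
  have hT : ∀ H : Module.End ℂ (⨂[ℂ] i, V i),
      (LinearMap.mulLeft ℂ (∑ ℓ, siteOp ρ ℓ X)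
        - LinearMap.mulRight ℂ (∑ ℓ, siteOp ρ ℓ X)) H
        = (∑ ℓ, siteOp ρ ℓ X) * H - H * (∑ ℓ, siteOp ρ ℓ X) := fun H => rfl
  have h1 : ∀ j : Fin L,
      (∑ ℓ, siteOp ρ ℓ X) * (Pm ρ k * Pm ρ j).trace
        - (Pm ρ k * Pm ρ j).trace * (∑ ℓ, siteOp ρ ℓ X) = 0 :=
    fun j => comm_tracePP16 ρ hρ X k j
  have h2 : ∀ j : Fin L,
      (∑ ℓ, siteOp ρ ℓ X) * (Pm ρ k * Qm ρ K j).trace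
        - (Pm ρ k * Qm ρ K j).trace * (∑ ℓ, siteOp ρ ℓ X) = 0 :=
    fun j => comm_tracePQ16 ρ hρ K X hKinv hX k j
  rw [← hT (Hout ρ z K k)]
  simp only [Hout]
  simp only [map_add, map_sum, _root_.map_smul]
  simp only [hT, h1, h2, smul_zero, add_zero, zero_add, Finset.sum_const_zero]
end
end
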